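/- For two abstract crystals B₁, B₂ with the tensor product structure and i ∈ I imaginary (so a_{ii} ≤ 0): the three cases in the definition of ẽ_i(b⊗b') — φ_i(b) > ε_i(b') - a_{ii}; ε_i(b') < φ_i(b) ≤ ε_i(b') - a_{ii}; φ_i(b) ≤ ε_i(b') — are mutually exclusive and exhaustive, and the tensor product rule satisfies the crystal axiom: if ẽ_i(b⊗b') ≠ 0 then ε_i(ẽ_i(b⊗b')) = ε_i(b⊗b') and φ_i(ẽ_i(b⊗b')) = φ_i(b⊗b') + a_{ii}. -/

import Mathlib

open Classical

/-- An abstract crystal for a quantum generalized Kac-Moody algebra: weight lattice `P`,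
pairings `⟨h_i, ·⟩ : P → ℤ`, simple roots `α_i`, real indices `re`, diagonal entries
`aii i = a_{ii}`. `ẽ_i b = 0`, `f̃_i b = 0` are modeled by `none`. -/
structure AbstractCrystal {I P : Type*} [AddCommGroup P]
    (pair : I → P →+ ℤ) (α : I → P) (re : I → Prop) (aii : I → ℤ) where
  carrier : Type*
  wt : carrier → P
  e : I → carrier → Option carrier
  f : I → carrier → Option carrier
  eps : I → carrier → WithBot ℤ
  phi : I → carrier → WithBot ℤ
  wt_e : ∀ i b b', e i b = some b' → wt b' = wt b + α i
  wt_f : ∀ i b b', f i b = some b' → wt b' = wt b - α i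
  phi_eps : ∀ i b, phi i b = eps i b + ((pair i (wt b) : ℤ) : WithBot ℤ)
  e_f : ∀ i b b', f i b = some b' ↔ e i b' = some b
  e_re : ∀ i b b', re i → e i b = some b' →
    eps i b' + 1 = eps i b ∧ phi i b' = phi i b + 1
  e_im : ∀ i b b', ¬ re i → e i b = some b' →
    eps i b' = eps i b ∧ phi i b' = phi i b + ((aii i : ℤ) : WithBot ℤ)
  f_re : ∀ i b b', re i → f i b = some b' →
    eps i b' = eps i b + 1 ∧ phi i b' + 1 = phi i b
  f_im : ∀ i b b', ¬ re i → f i b = some b' →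
    eps i b' = eps i b ∧ phi i b' + ((aii i : ℤ) : WithBot ℤ) = phi i b
  bot_ef : ∀ i b, phi i b = ⊥ → e i b = none ∧ f i b = none

variable {I P : Type*} [AddCommGroup P] {pair : I → P →+ ℤ} {α : I → P}
  {re : I → Prop} {aii : I → ℤ}

/-- Tensor product `ε`: `ε_i(b ⊗ b') = max(ε_i(b), ε_i(b') - ⟨h_i, wt b⟩)`. -/
noncomputable def tEps (C D : AbstractCrystal pair α re aii) (i : I)
    (p : C.carrier × D.carrier) : WithBot ℤ :=
  max (C.eps i p.1) (D.eps i p.2 + ((-(pair i (C.wt p.1)) : ℤ) : WithBot ℤ))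

/-- Tensor product `φ`: `φ_i(b ⊗ b') = max(φ_i(b) + ⟨h_i, wt b'⟩, φ_i(b'))`. -/
noncomputable def tPhi (C D : AbstractCrystal pair α re aii) (i : I)
    (p : C.carrier × D.carrier) : WithBot ℤ :=
  max (C.phi i p.1 + ((pair i (D.wt p.2) : ℤ) : WithBot ℤ)) (D.phi i p.2)

/-- Tensor product `f̃_i`: `f̃_i(b ⊗ b') = f̃_i b ⊗ b'` if `φ_i(b) > ε_i(b')`, and
`b ⊗ f̃_i b'` if `φ_i(b) ≤ ε_i(b')`. -/
noncomputable def tF (C D : AbstractCrystal pair α re aii) (i : I)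
    (p : C.carrier × D.carrier) : Option (C.carrier × D.carrier) :=
  if D.eps i p.2 < C.phi i p.1 then (C.f i p.1).map (fun b => (b, p.2))
  else (D.f i p.2).map (fun b' => (p.1, b'))

/-- Tensor product `ẽ_i` for imaginary `i`: `ẽ_i b ⊗ b'` if `φ_i(b) > ε_i(b') - a_{ii}`,
`0` if `ε_i(b') < φ_i(b) ≤ ε_i(b') - a_{ii}`, and `b ⊗ ẽ_i b'` if `φ_i(b) ≤ ε_i(b')`. -/
noncomputable def tEim (C D : AbstractCrystal pair α re aii) (i : I)
    (p : C.carrier × D.carrier) : Option (C.carrier × D.carrier) :=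
  if D.eps i p.2 + ((-(aii i) : ℤ) : WithBot ℤ) < C.phi i p.1 then
    (C.e i p.1).map (fun b => (b, p.2))
  else if C.phi i p.1 ≤ D.eps i p.2 then (D.e i p.2).map (fun b' => (p.1, b'))
  else none

/-- If `ẽ_i b` is defined then `ε_i(b)` (hence `φ_i(b)`) is an integer. -/
lemma aux_e_int (C : AbstractCrystal pair α re aii) (i : I) (b b₀ : C.carrier)
    (h : C.e i b = some b₀) :
    ∃ u : ℤ, C.eps i b = (u : WithBot ℤ) ∧
      C.phi i b = ((u + pair i (C.wt b) : ℤ) : WithBot ℤ) := by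
  have hphi : C.phi i b ≠ ⊥ := by
    intro hb
    rw [(C.bot_ef i b hb).1] at h
    simp at h
  have hpe := C.phi_eps i b
  have heps : C.eps i b ≠ ⊥ := by
    intro hb
    apply hphi
    rw [hpe, hb, WithBot.bot_add]
  obtain ⟨u, hu⟩ := WithBot.ne_bot_iff_exists.mp heps
  exact ⟨u, hu.symm, by rw [hpe, ← hu, ← WithBot.coe_add]⟩

/-- If some `ẽ_i b` is defined for imaginary `i`, then `⟨h_i, α_i⟩ = a_{ii}`. -/
lemma aux_pair_alpha (C : AbstractCrystal pair α re aii) (i : I) (hi : ¬ re i)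
    (b b₀ : C.carrier) (h : C.e i b = some b₀) : pair i (α i) = aii i := by
  obtain ⟨u, hu, hphib⟩ := aux_e_int C i b b₀ h
  obtain ⟨heps₀, hphi₀⟩ := C.e_im i b b₀ hi h
  have h2 := C.phi_eps i b₀
  rw [heps₀, hu, C.wt_e i b b₀ h, map_add] at h2
  rw [h2, hphib] at hphi₀
  norm_cast at hphi₀
  omega

/-- for imaginary `i` (`a_{ii} ≤ 0`), the three cases in the definition of
`ẽ_i(b ⊗ b')` are mutually exclusive and exhaustive, and the tensor product rule
satisfies the crystal axiom: if `ẽ_i(b ⊗ b') ≠ 0` then `ε_i(ẽ_i(b ⊗ b')) = ε_i(b ⊗ b')`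
and `φ_i(ẽ_i(b ⊗ b')) = φ_i(b ⊗ b') + a_{ii}`. -/
theorem stmt8 (C D : AbstractCrystal pair α re aii) (i : I) (hi : ¬ re i)
    (ha : aii i ≤ 0) :
    (∀ p : C.carrier × D.carrier,
      ((D.eps i p.2 + ((-(aii i) : ℤ) : WithBot ℤ) < C.phi i p.1) ∨
       (D.eps i p.2 < C.phi i p.1 ∧ C.phi i p.1 ≤ D.eps i p.2 + ((-(aii i) : ℤ) : WithBot ℤ)) ∨
       (C.phi i p.1 ≤ D.eps i p.2)) ∧
      ¬ ((D.eps i p.2 + ((-(aii i) : ℤ) : WithBot ℤ) < C.phi i p.1) ∧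
         (D.eps i p.2 < C.phi i p.1 ∧ C.phi i p.1 ≤ D.eps i p.2 + ((-(aii i) : ℤ) : WithBot ℤ))) ∧
      ¬ ((D.eps i p.2 + ((-(aii i) : ℤ) : WithBot ℤ) < C.phi i p.1) ∧
         (C.phi i p.1 ≤ D.eps i p.2)) ∧
      ¬ ((D.eps i p.2 < C.phi i p.1 ∧ C.phi i p.1 ≤ D.eps i p.2 + ((-(aii i) : ℤ) : WithBot ℤ)) ∧
         (C.phi i p.1 ≤ D.eps i p.2))) ∧
    (∀ p q : C.carrier × D.carrier, tEim C D i p = some q →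
      tEps C D i q = tEps C D i p ∧
      tPhi C D i q = tPhi C D i p + ((aii i : ℤ) : WithBot ℤ)) := by
  constructor
  · intro p
    have hle : D.eps i p.2 ≤ D.eps i p.2 + ((-(aii i) : ℤ) : WithBot ℤ) :=
      le_add_of_nonneg_right (by exact_mod_cast neg_nonneg.mpr ha)
    refine ⟨?_, ?_, ?_, ?_⟩
    · rcases le_or_gt (C.phi i p.1) (D.eps i p.2) with h | h
      · exact Or.inr (Or.inr h)
      · rcases lt_or_ge (D.eps i p.2 + ((-(aii i) : ℤ) : WithBot ℤ)) (C.phi i p.1)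
          with h2 | h2
        · exact Or.inl h2
        · exact Or.inr (Or.inl ⟨h, h2⟩)
    · rintro ⟨h1, _, h2⟩; exact absurd h1 (not_lt.mpr h2)
    · rintro ⟨h1, h2⟩; exact absurd h1 (not_lt.mpr (h2.trans hle))
    · rintro ⟨⟨h1, _⟩, h2⟩; exact absurd h1 (not_lt.mpr h2)
  · rintro ⟨b, b'⟩ q hq
    simp only [tEim] at hq
    split_ifs at hq with h1 h2
    · -- case 1 : ε_i(b') - a_{ii} < φ_i(b), move in the first factor
      cases he : C.e i b with
      | none => rw [he] at hq; simp at hq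
      | some b₀ =>
        rw [he] at hq
        simp only [Option.map_some, Option.some.injEq] at hq
        subst hq
        obtain ⟨u, hu, hphib⟩ := aux_e_int C i b b₀ he
        have hpa := aux_pair_alpha C i hi b b₀ he
        obtain ⟨heps₀, hphi₀⟩ := C.e_im i b b₀ hi he
        have hwt := C.wt_e i b b₀ he
        have hDpe := D.phi_eps i b'
        rcases eq_or_ne (D.eps i b') ⊥ with hb' | hb'
        · have hDb : D.phi i b' = ⊥ := by rw [hDpe, hb', WithBot.bot_add]
          constructor
          · simp only [tEps]
            rw [heps₀, hb', WithBot.bot_add, WithBot.bot_add]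
          · simp only [tPhi]
            rw [hDb, hphi₀, hphib]
            rw [max_eq_left bot_le, max_eq_left bot_le]
            exact add_right_comm _ _ _
        · obtain ⟨w, hw'⟩ := WithBot.ne_bot_iff_exists.mp hb'
          rw [← hw', hphib] at h1
          have hc : w + -(aii i) < u + pair i (C.wt b) := by exact_mod_cast h1
          constructor
          · simp only [tEps]
            rw [heps₀, hwt, map_add, hpa, ← hw', hu]
            rw [max_eq_left (by exact_mod_cast (by omega :
                  w + -(pair i (C.wt b) + aii i) ≤ u)),
                max_eq_left (by exact_mod_cast (by omega :
                  w + -(pair i (C.wt b)) ≤ u))]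
          · simp only [tPhi]
            rw [hphi₀, hphib, hDpe, ← hw']
            rw [max_eq_left (by exact_mod_cast (by omega :
                  w + pair i (D.wt b') ≤ u + pair i (C.wt b) + aii i + pair i (D.wt b'))),
                max_eq_left (by exact_mod_cast (by omega :
                  w + pair i (D.wt b') ≤ u + pair i (C.wt b) + pair i (D.wt b')))]
            exact add_right_comm _ _ _
    · -- case 3 : φ_i(b) ≤ ε_i(b'), move in the second factor
      cases he : D.e i b' with
      | none => rw [he] at hq; simp at hq
      | some b₀ =>
        rw [he] at hq
        simp only [Option.map_some, Option.some.injEq] at hq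
        subst hq
        have hpa := aux_pair_alpha D i hi b' b₀ he
        obtain ⟨heps₀, hphi₀⟩ := D.e_im i b' b₀ hi he
        have hwt := D.wt_e i b' b₀ he
        constructor
        · simp only [tEps]
          rw [heps₀]
        · simp only [tPhi]
          rw [hwt, map_add, hpa, hphi₀, WithBot.coe_add, ← add_assoc]
          exact max_add_add_right _ _ _
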